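/- Let A be an n×n real matrix that is row stochastic (all entries nonnegative and each row sums to 1) and primitive (there exists a positive integer K such that every entry of A^K is strictly positive), and let π ∈ ℝ^n have all entries positive, entries summing to 1, and satisfy π^T A = π^T. Then every complex eigenvalue of the matrix A − 𝟙 π^T has modulus strictly less than 1, where 𝟙 π^T is the rank-one matrix whose (i,j) entry is π_j; equivalently, the spectral radius of A − 𝟙 π^T is strictly less than 1. -/

import Mathlib

open Finset in
private lemma aux_row_sum_pow {n : ℕ} (A : Matrix (Fin n) (Fin n) ℝ)
    (hArow : ∀ i, ∑ j, A i j = 1) (K : ℕ) (hK : 0 < K) :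
    ∀ i, ∑ j, (A ^ K) i j = 1 := by
  induction K with
  | zero => omega
  | succ m ih =>
    intro i
    rcases Nat.eq_zero_or_pos m with hm | hm
    · subst hm; simpa using hArow i
    · have hm' := ih hm
      rw [pow_succ]
      calc ∑ j, (A ^ m * A) i j = ∑ j, ∑ k, (A ^ m) i k * A k j := by
            simp [Matrix.mul_apply]
        _ = ∑ k, (A ^ m) i k * ∑ j, A k j := by
            rw [Finset.sum_comm]; simp [Finset.mul_sum]
        _ = 1 := by simp [hArow, hm' i]

private lemma aux_mem_spectrum {n : ℕ} (M : Matrix (Fin n) (Fin n) ℂ) (z : ℂ)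
    (hz : z ∈ spectrum ℂ M) : ∃ v : Fin n → ℂ, v ≠ 0 ∧ M.mulVec v = z • v := by
  rw [spectrum.mem_iff] at hz
  rw [Matrix.isUnit_iff_isUnit_det, isUnit_iff_ne_zero, not_not,
    ← Matrix.exists_mulVec_eq_zero_iff] at hz
  obtain ⟨v, hv0, hv⟩ := hz
  refine ⟨v, hv0, ?_⟩
  have : (algebraMap ℂ (Matrix (Fin n) (Fin n) ℂ) z) = z • 1 := by
    simp [Algebra.algebraMap_eq_smul_one]
  rw [this, Matrix.sub_mulVec, Matrix.smul_mulVec, Matrix.one_mulVec, sub_eq_zero] at hv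
  exact hv.symm

/-- A complex number whose real part equals its norm is real (equal to its norm). -/
private lemma aux_re_eq_norm {c : ℂ} (h : c.re = ‖c‖) : c = (‖c‖ : ℂ) := by
  have h2 : ‖c‖ ^ 2 = c.re * c.re + c.im * c.im := by
    rw [Complex.sq_norm, Complex.normSq_apply]
  have him : c.im = 0 := by
    rw [h, pow_two] at h2
    have : c.im * c.im = 0 := by linarith
    exact mul_self_eq_zero.mp this
  apply Complex.ext <;> simp [h, him]

/-- If `A` is a primitive row stochastic matrix with positive left
eigenvector `π` (entries summing to 1, `π^T A = π^T`), then every complex eigenvalue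
of `A − 𝟙 π^T` has modulus strictly less than 1; equivalently the spectral radius of
`A − 𝟙 π^T` is strictly less than 1. -/
theorem primitive_row_stochastic_residual_spectrum_lt_one
    (n : ℕ) (hn : 0 < n)
    (A : Matrix (Fin n) (Fin n) ℝ)
    (hAnn : ∀ i j, 0 ≤ A i j) (hArow : ∀ i, ∑ j, A i j = 1)
    (hprim : ∃ K : ℕ, 0 < K ∧ ∀ i j, 0 < (A^K) i j)
    (π : Fin n → ℝ) (hπ : ∀ i, 0 < π i) (hπsum : ∑ i, π i = 1)
    (hπA : ∀ j, ∑ i, π i * A i j = π j) :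
    (∀ z ∈ spectrum ℂ ((A - Matrix.of fun _ j => π j).map (fun r => (r : ℂ))), ‖z‖ < 1) ∧
      spectralRadius ℂ ((A - Matrix.of fun _ j => π j).map (fun r => (r : ℂ))) < 1 := by
  obtain ⟨K, hK, hKpos⟩ := hprim
  set B : Matrix (Fin n) (Fin n) ℂ := (A - Matrix.of fun _ j => π j).map (fun r => (r : ℂ))
    with hB
  have hBapp : ∀ i j, B i j = (A i j : ℂ) - (π j : ℂ) := by
    intro i j; simp [hB, Matrix.map_apply, Matrix.sub_apply]
  set Ac : Matrix (Fin n) (Fin n) ℂ := A.map (fun r => (r : ℂ)) with hAc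
  have hAcpow : ∀ m : ℕ, (Ac ^ m) = (A ^ m).map (fun r => (r : ℂ)) := by
    intro m
    have : Ac = (Complex.ofRealHom.mapMatrix) A := rfl
    rw [this, ← map_pow]
    rfl
  have main : ∀ z ∈ spectrum ℂ B, ‖z‖ < 1 := by
    intro z hz
    by_contra hge
    push_neg at hge
    have hz0 : z ≠ 0 := by
      intro h; rw [h] at hge; simp at hge; linarith
    obtain ⟨v, hv0, hv⟩ := aux_mem_spectrum B z hz
    -- π^T v = 0
    have hπv : ∑ i, (π i : ℂ) * v i = 0 := by
      have hcol : ∀ j, ∑ i, (π i : ℂ) * B i j = 0 := by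
        intro j
        have : ∑ i, (π i : ℂ) * B i j
            = ((∑ i, π i * A i j : ℝ) : ℂ) - ((∑ i, π i : ℝ) : ℂ) * (π j : ℂ) := by
          simp only [hBapp, mul_sub]
          push_cast
          rw [Finset.sum_sub_distrib, Finset.sum_mul]
        rw [this, hπA j, hπsum]; simp
      have h1 : ∑ i, (π i : ℂ) * (B.mulVec v) i = z * ∑ i, (π i : ℂ) * v i := by
        rw [hv]
        simp only [Pi.smul_apply, smul_eq_mul, Finset.mul_sum]
        exact Finset.sum_congr rfl fun i _ => by ring
      have h2 : ∑ i, (π i : ℂ) * (B.mulVec v) i = 0 := by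
        simp only [Matrix.mulVec, dotProduct, Finset.mul_sum]
        rw [Finset.sum_comm]
        refine Finset.sum_eq_zero fun j _ => ?_
        have hc := hcol j
        calc ∑ i, (π i : ℂ) * (B i j * v j) = (∑ i, (π i : ℂ) * B i j) * v j := by
              rw [Finset.sum_mul]; exact Finset.sum_congr rfl fun i _ => by ring
          _ = 0 := by rw [hc, zero_mul]
      rw [h2] at h1
      exact (mul_eq_zero.mp h1.symm).resolve_left hz0
    -- hence Ac v = z v
    have hAv : Ac.mulVec v = z • v := by
      funext i
      have hsplit : (B.mulVec v) i = (Ac.mulVec v) i - ∑ j, (π j : ℂ) * v j := by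
        simp only [Matrix.mulVec, dotProduct, hBapp, hAc, Matrix.map_apply, sub_mul,
          Finset.sum_sub_distrib]
      rw [hv] at hsplit
      rw [hπv, sub_zero] at hsplit
      exact hsplit.symm
    have hAmv : (Ac ^ K).mulVec v = (z ^ K) • v := by
      clear hKpos
      induction K with
      | zero => simp
      | succ m ih =>
        rcases Nat.eq_zero_or_pos m with hm | hm
        · subst hm; simpa using hAv
        · rw [pow_succ, ← Matrix.mulVec_mulVec, hAv, Matrix.mulVec_smul, ih hm, smul_smul,
            ← pow_succ']
    -- max modulus index
    obtain ⟨i0, -, hi0⟩ := Finset.exists_max_image Finset.univ (fun i => ‖v i‖)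
      (Finset.univ_nonempty_iff.mpr (Fin.pos_iff_nonempty.mp hn))
    set M : ℝ := ‖v i0‖ with hM
    have hMub : ∀ j, ‖v j‖ ≤ M := fun j => hi0 j (Finset.mem_univ j)
    have hM0 : 0 < M := by
      obtain ⟨k, hk⟩ := Function.ne_iff.mp hv0
      exact lt_of_lt_of_le (norm_pos_iff.mpr hk) (hMub k)
    set P : Fin n → ℝ := fun j => (A ^ K) i0 j with hP
    have hPpos : ∀ j, 0 < P j := fun j => hKpos i0 j
    have hPsum : ∑ j, P j = 1 := aux_row_sum_pow A hArow K hK i0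
    have hE : ∑ j, (P j : ℂ) * v j = z ^ K * v i0 := by
      have h := congrFun hAmv i0
      simp only [Matrix.mulVec, dotProduct, Pi.smul_apply, smul_eq_mul] at h
      rw [← h]
      refine Finset.sum_congr rfl fun j _ => ?_
      rw [hAcpow]
      rfl
    have hnormE : ‖z‖ ^ K * M ≤ M := by
      calc ‖z‖ ^ K * M = ‖z ^ K * v i0‖ := by rw [norm_mul, norm_pow]
        _ = ‖∑ j, (P j : ℂ) * v j‖ := by rw [hE]
        _ ≤ ∑ j, ‖(P j : ℂ) * v j‖ := norm_sum_le _ _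
        _ = ∑ j, P j * ‖v j‖ := by
            refine Finset.sum_congr rfl fun j _ => ?_
            rw [norm_mul, Complex.norm_real, Real.norm_eq_abs, abs_of_pos (hPpos j)]
        _ ≤ ∑ j, P j * M := by
            refine Finset.sum_le_sum fun j _ => ?_
            exact mul_le_mul_of_nonneg_left (hMub j) (hPpos j).le
        _ = M := by rw [← Finset.sum_mul, hPsum, one_mul]
    have hzK1 : ‖z‖ ^ K = 1 := by
      have h1 : (1 : ℝ) ≤ ‖z‖ ^ K := one_le_pow₀ hge
      nlinarith
    -- real part equality argument
    set u : ℂ := (starRingEnd ℂ) (z ^ K * v i0) with hu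
    have hunorm : ‖u‖ = M := by
      rw [hu, RCLike.norm_conj, norm_mul, norm_pow, hzK1, one_mul]
    have hns : Complex.normSq (z ^ K * v i0) = M * M := by
      rw [Complex.normSq_eq_norm_sq, norm_mul, norm_pow, hzK1, one_mul]
      ring
    have huzv : u * (z ^ K * v i0) = ((M * M : ℝ) : ℂ) := by
      rw [hu, mul_comm, Complex.mul_conj, hns]
    have hsumre : ∑ j, P j * (u * v j).re = M * M := by
      have hEq : u * ∑ j, (P j : ℂ) * v j = ((M * M : ℝ) : ℂ) := by rw [hE, huzv]
      have hre := congrArg Complex.re hEq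
      rw [Finset.mul_sum] at hre
      calc ∑ j, P j * (u * v j).re = ∑ j, (u * ((P j : ℂ) * v j)).re := by
            refine Finset.sum_congr rfl fun j _ => ?_
            rw [show u * ((P j : ℂ) * v j) = (P j : ℂ) * (u * v j) by ring,
              Complex.re_ofReal_mul]
        _ = (∑ j, u * ((P j : ℂ) * v j)).re := (Complex.re_sum _ _).symm
        _ = M * M := by rw [hre, Complex.ofReal_re]
    have hreub : ∀ j, (u * v j).re ≤ M * M := by
      intro j
      calc (u * v j).re ≤ ‖u * v j‖ := Complex.re_le_norm _
        _ = M * ‖v j‖ := by rw [norm_mul, hunorm]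
        _ ≤ M * M := mul_le_mul_of_nonneg_left (hMub j) hM0.le
    have hreeq : ∀ j, (u * v j).re = M * M := by
      have hzero : ∑ j, P j * (M * M - (u * v j).re) = 0 := by
        simp only [mul_sub]
        rw [Finset.sum_sub_distrib, ← Finset.sum_mul, hPsum, one_mul, hsumre, sub_self]
      have hterm := (Finset.sum_eq_zero_iff_of_nonneg
        (fun j _ => mul_nonneg (hPpos j).le (by linarith [hreub j]))).mp hzero
      intro j
      have := hterm j (Finset.mem_univ j)
      rcases mul_eq_zero.mp this with h | h
      · exact absurd h (hPpos j).ne'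
      · linarith
    -- all v j equal
    have hveq : ∀ j, u * v j = ((M * M : ℝ) : ℂ) := by
      intro j
      have h1 := hreeq j
      have h2 : ‖u * v j‖ ≤ M * M := by
        rw [norm_mul, hunorm]; exact mul_le_mul_of_nonneg_left (hMub j) hM0.le
      have h3 : (u * v j).re = ‖u * v j‖ :=
        le_antisymm (Complex.re_le_norm _) (h2.trans_eq h1.symm)
      have h4 := aux_re_eq_norm h3
      rw [h4, ← h3, h1]
    have hu0 : u ≠ 0 := by
      intro h; rw [h, norm_zero] at hunorm; linarith
    have hvconst : ∀ j, v j = v i0 := fun j =>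
      mul_left_cancel₀ hu0 ((hveq j).trans (hveq i0).symm)
    have hvi0 : v i0 = 0 := by
      have hsum : ∑ i, (π i : ℂ) * v i = ((∑ i, π i : ℝ) : ℂ) * v i0 := by
        push_cast
        rw [Finset.sum_mul]
        exact Finset.sum_congr rfl fun i _ => by rw [hvconst i]
      rw [hπv, hπsum] at hsum
      simpa using hsum.symm
    rw [hM, hvi0, norm_zero] at hM0
    exact lt_irrefl 0 hM0
  refine ⟨main, ?_⟩
  rw [spectralRadius]
  have hfin : (spectrum ℂ B).Finite := B.finite_spectrum
  rw [show (⨆ k ∈ spectrum ℂ B, (‖k‖₊ : ENNReal)) = hfin.toFinset.sup (fun k => (‖k‖₊ : ENNReal))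
    from by rw [Finset.sup_eq_iSup]; exact iSup_congr fun k => by rw [hfin.mem_toFinset]]
  rw [Finset.sup_lt_iff (by norm_num : (⊥ : ENNReal) < 1)]
  intro z hzmem
  rw [Set.Finite.mem_toFinset] at hzmem
  have hlt := main z hzmem
  rw [show (1 : ENNReal) = ((1 : NNReal) : ENNReal) from rfl, ENNReal.coe_lt_coe]
  rwa [← NNReal.coe_lt_coe, coe_nnnorm, NNReal.coe_one]
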